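/- Let λ be a measure on ℝ mutually absolutely continuous with Lebesgue measure and finite on bounded intervals, and let g(x,q) = ∫_q^x (x−v) dλ(v) (sign convention as usual). Let P be a probability measure on ℝ (countably additive suffices) with finite mean p = E_P[X], and suppose E_P[g(X,q₀)] < ∞ for some q₀. Then E_P[g(X,q)] is finite for q = p and is uniquely minimized over q at q = p. In particular g is strictly proper. -/

import Mathlib

open MeasureTheory intervalIntegral

/-- Scoring rule `g(x,q) = ∫_q^x (x - v) dλ(v)`. -/
noncomputable def score (lam : Measure ℝ) (x q : ℝ) : ℝ :=
  ∫ v in q..x, (x - v) ∂lam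

/-- a scoring rule of the form `g(x,q) = ∫_q^x (x-v) dλ(v)` is
strictly proper: if `P` has finite mean `p` and `E_P[g(X,q₀)] < ∞` for some
`q₀`, then `E_P[g(X,p)]` is finite and the expected score is uniquely
minimized at `q = p`.  (Expected scores are taken as lower integrals of the
nonnegative scores, so that infinite values are handled correctly.) -/
theorem score_strictly_proper (lam : Measure ℝ)
    (h1 : lam ≪ volume) (h2 : volume ≪ lam)
    (hfin : ∀ a b : ℝ, lam (Set.Ioo a b) < ⊤)
    (P : Measure ℝ) [IsProbabilityMeasure P]
    (hX : Integrable (fun x => x) P)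
    (p : ℝ) (hp : p = ∫ x, x ∂P)
    (q₀ : ℝ) (hq₀ : ∫⁻ x, ENNReal.ofReal (score lam x q₀) ∂P < ⊤) :
    (∫⁻ x, ENNReal.ofReal (score lam x p) ∂P < ⊤) ∧
      ∀ q : ℝ, q ≠ p →
        (∫⁻ x, ENNReal.ofReal (score lam x p) ∂P)
          < ∫⁻ x, ENNReal.ofReal (score lam x q) ∂P := by
  haveI hloc : IsLocallyFiniteMeasure lam :=
    ⟨fun x => ⟨Set.Ioo (x - 1) (x + 1), Ioo_mem_nhds (by linarith) (by linarith),
      hfin _ _⟩⟩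
  haveI hna : NullSingletonClass lam := ⟨fun x => h1 (measure_singleton x)⟩
  -- interval integrability of the relevant functions
  have hII : ∀ (x a b : ℝ), IntervalIntegrable (fun v => x - v) lam a b := fun x a b =>
    (continuous_const.sub continuous_id).intervalIntegrable a b
  have hII1 : ∀ a b : ℝ, IntervalIntegrable (fun _ => (1 : ℝ)) lam a b := fun a b =>
    continuous_const.intervalIntegrable a b
  have hIIv : ∀ a b : ℝ, IntervalIntegrable (fun v => v) lam a b := fun a b =>
    continuous_id.intervalIntegrable a b
  -- measures of intervals are finite and positive
  have hIocfin : ∀ a b : ℝ, lam (Set.Ioc a b) < ⊤ := by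
    intro a b
    refine lt_of_le_of_lt (measure_mono ?_) (hfin a (b + 1))
    exact fun x hx => ⟨hx.1, by linarith [hx.2]⟩
  have hpos : ∀ a b : ℝ, a < b → 0 < (lam (Set.Ioc a b)).toReal := by
    intro a b hab
    refine ENNReal.toReal_pos ?_ (hIocfin a b).ne
    intro h
    have := h2 h
    rw [Real.volume_Ioc, ENNReal.ofReal_eq_zero] at this
    linarith
  -- linear expansion of interval integrals
  have hlin : ∀ x a b : ℝ,
      (∫ v in a..b, (x - v) ∂lam) = x * (∫ v in a..b, (1 : ℝ) ∂lam) - ∫ v in a..b, v ∂lam := by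
    intro x a b
    have h : (∫ v in a..b, (x - v) ∂lam)
        = (∫ v in a..b, x * (1 : ℝ) ∂lam) - ∫ v in a..b, v ∂lam := by
      rw [← intervalIntegral.integral_sub (by simpa using (hII1 a b).const_mul x) (hIIv a b)]
      simp
    rw [h, intervalIntegral.integral_const_mul]
  -- splitting identity
  have hsplit : ∀ x q r : ℝ,
      score lam x q = (∫ v in q..r, (x - v) ∂lam) + score lam x r := by
    intro x q r
    rw [score, score, intervalIntegral.integral_add_adjacent_intervals (hII x q r) (hII x r x)]
  -- nonnegativity of the score
  have hnn : ∀ x q : ℝ, 0 ≤ score lam x q := by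
    intro x q
    rcases le_total q x with h | h
    · exact intervalIntegral.integral_nonneg h (fun u hu => by linarith [hu.2])
    · rw [score, intervalIntegral.integral_symm]
      have h1' : (0:ℝ) ≤ ∫ v in x..q, (v - x) ∂lam :=
        intervalIntegral.integral_nonneg h (fun u hu => by linarith [hu.1])
      have heq : (∫ v in x..q, (x - v) ∂lam) = - ∫ v in x..q, (v - x) ∂lam := by
        rw [← intervalIntegral.integral_neg]; congr 1; funext v; ring
      rw [heq]; linarith
  -- continuity in x
  have hcont : ∀ q : ℝ, Continuous (fun x => score lam x q) := by
    intro q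
    have hform : (fun x => score lam x q)
        = fun x => x * (∫ v in q..x, (1 : ℝ) ∂lam) - ∫ v in q..x, v ∂lam := by
      funext x; rw [score, hlin]
    rw [hform]
    exact (continuous_id.mul (intervalIntegral.continuous_primitive hII1 q)).sub
      (intervalIntegral.continuous_primitive hIIv q)
  -- integrability of the score at q₀
  have hint0 : Integrable (fun x => score lam x q₀) P := by
    refine ⟨(hcont q₀).aestronglyMeasurable, ?_⟩
    rw [hasFiniteIntegral_iff_ofReal (Filter.Eventually.of_forall fun x => hnn x q₀)]
    exact hq₀
  -- integrability of the score at every q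
  have hint : ∀ q : ℝ, Integrable (fun x => score lam x q) P := by
    intro q
    have h : (fun x => score lam x q)
        = fun x => (x * (∫ v in q..q₀, (1 : ℝ) ∂lam) - ∫ v in q..q₀, v ∂lam)
            + score lam x q₀ := by
      funext x; rw [hsplit x q q₀, hlin]
    rw [h]
    exact ((hX.mul_const _).sub (integrable_const _)).add hint0
  -- expectation identity
  have hexp : ∀ q : ℝ, (∫ x, score lam x q ∂P)
      = (∫ v in q..p, (p - v) ∂lam) + ∫ x, score lam x p ∂P := by
    intro q
    have h : (∫ x, score lam x q ∂P)
        = ∫ x, ((x * (∫ v in q..p, (1 : ℝ) ∂lam) - ∫ v in q..p, v ∂lam)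
            + score lam x p) ∂P := by
      congr 1; funext x; rw [hsplit x q p, hlin]
    have hL : (∫ x, (x * (∫ v in q..p, (1 : ℝ) ∂lam) - ∫ v in q..p, v ∂lam) ∂P)
        = p * (∫ v in q..p, (1 : ℝ) ∂lam) - ∫ v in q..p, v ∂lam := by
      rw [integral_sub (hX.mul_const _) (integrable_const _), MeasureTheory.integral_mul_const,
        MeasureTheory.integral_const, ← hp]
      simp
    have hfint : Integrable
        (fun x => x * (∫ v in q..p, (1 : ℝ) ∂lam) - ∫ v in q..p, v ∂lam) P :=
      (hX.mul_const _).sub (integrable_const _)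
    rw [h, integral_add hfint (hint p), hL, hlin p q p]
  -- positivity of the gap
  have hgap : ∀ q : ℝ, q ≠ p → 0 < ∫ v in q..p, (p - v) ∂lam := by
    intro q hq
    rcases lt_or_gt_of_ne hq with hlt | hgt
    · -- q < p
      set m := (q + p) / 2 with hm
      have hqm : q < m := by rw [hm]; linarith
      have hmp : m < p := by rw [hm]; linarith
      have hIntOn : IntegrableOn (fun v => p - v) (Set.Ioc q p) lam := (hII p q p).1
      have step1 : (p - m) * (lam (Set.Ioc q m)).toReal
          ≤ ∫ v in Set.Ioc q m, (p - v) ∂lam := by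
        refine setIntegral_ge_of_const_le_real measurableSet_Ioc (hIocfin q m).ne
          (fun x hx => by linarith [hx.2]) ?_
        exact (hII p q m).1
      have step2 : (∫ v in Set.Ioc q m, (p - v) ∂lam)
          ≤ ∫ v in Set.Ioc q p, (p - v) ∂lam := by
        refine setIntegral_mono_set hIntOn ?_
          ((Set.Ioc_subset_Ioc_right hmp.le).eventuallyLE)
        filter_upwards [ae_restrict_mem measurableSet_Ioc] with x hx
        simp only [Pi.zero_apply]
        linarith [hx.2]
      rw [intervalIntegral.integral_of_le hlt.le]
      have : 0 < (p - m) * (lam (Set.Ioc q m)).toReal :=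
        mul_pos (by linarith) (hpos q m hqm)
      linarith
    · -- p < q
      set m := (p + q) / 2 with hm
      have hpm : p < m := by rw [hm]; linarith
      have hmq : m < q := by rw [hm]; linarith
      have heq : (∫ v in q..p, (p - v) ∂lam) = ∫ v in Set.Ioc p q, (v - p) ∂lam := by
        rw [intervalIntegral.integral_symm, intervalIntegral.integral_of_le hgt.le,
          ← MeasureTheory.integral_neg]
        congr 1; funext v; ring
      rw [heq]
      have hIntOn : IntegrableOn (fun v => v - p) (Set.Ioc p q) lam :=
        ((continuous_id.sub continuous_const).intervalIntegrable p q).1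
      have step1 : (m - p) * (lam (Set.Ioc m q)).toReal
          ≤ ∫ v in Set.Ioc m q, (v - p) ∂lam := by
        refine setIntegral_ge_of_const_le_real measurableSet_Ioc (hIocfin m q).ne
          (fun x hx => by linarith [hx.1]) ?_
        exact ((continuous_id.sub continuous_const).intervalIntegrable m q).1
      have step2 : (∫ v in Set.Ioc m q, (v - p) ∂lam)
          ≤ ∫ v in Set.Ioc p q, (v - p) ∂lam := by
        refine setIntegral_mono_set hIntOn ?_
          ((Set.Ioc_subset_Ioc_left hpm.le).eventuallyLE)
        filter_upwards [ae_restrict_mem measurableSet_Ioc] with x hx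
        simp only [Pi.zero_apply]
        linarith [hx.1]
      have : 0 < (m - p) * (lam (Set.Ioc m q)).toReal :=
        mul_pos (by linarith) (hpos m q hmq)
      linarith
  -- convert lower integrals to Bochner integrals
  have hiconv : ∀ q : ℝ, (∫⁻ x, ENNReal.ofReal (score lam x q) ∂P)
      = ENNReal.ofReal (∫ x, score lam x q ∂P) := fun q =>
    (ofReal_integral_eq_lintegral_ofReal (hint q)
      (Filter.Eventually.of_forall fun x => hnn x q)).symm
  have h0 : 0 ≤ ∫ x, score lam x p ∂P := integral_nonneg (fun x => hnn x p)
  constructor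
  · rw [hiconv]; exact ENNReal.ofReal_lt_top
  · intro q hq
    rw [hiconv, hiconv, hexp q]
    have hg := hgap q hq
    exact (ENNReal.ofReal_lt_ofReal_iff (by linarith)).mpr (by linarith)
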